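/- If j = j(n) satisfies n - j = o(n) and j → ∞, then P{Y_{n,j} = 0} → 1 as n → ∞. -/

import Mathlib

open Filter

/-- Generalized binomial coefficient `binom(x, n) = x(x-1)⋯(x-n+1)/n!`. -/
noncomputable def gbinom (x : ℝ) (n : ℕ) : ℝ :=
  (∏ i ∈ Finset.range n, (x - i)) / (Nat.factorial n)

/-- `P{Y_{n,j} = m}`: the exact distribution of the out-degree of node `j` in a
random ordered increasing `k`-tree of size `n`. -/
noncomputable def Pdeg (k n j m : ℕ) : ℝ :=
  gbinom ((j : ℝ) - k / (k + 1)) j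
    / (gbinom ((n : ℝ) - k / (k + 1)) n * (Nat.choose n j : ℝ))
    * ∑ ℓ ∈ Finset.range (m + 1),
        (Nat.choose m ℓ : ℝ) * (-1) ^ ℓ * gbinom ((n : ℝ) - (k : ℝ) * (2 + ℓ) / (k + 1)) (n - j)

lemma pdeg_eq (k n j : ℕ) (hj : 1 ≤ j) (hle : j ≤ n) :
    Pdeg k n j 0 = ∏ i ∈ Finset.range (n - j),
      ((n : ℝ) - 2 * ((k : ℝ) / (k + 1)) - i) / ((n : ℝ) - (k : ℝ) / (k + 1) - i) := by
  obtain ⟨d, rfl⟩ : ∃ d, n = d + j := ⟨n - j, by omega⟩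
  have hd : d + j - j = d := by omega
  have hkpos : (0:ℝ) < (k:ℝ) + 1 := by positivity
  set c : ℝ := (k : ℝ) / (k + 1) with hc
  have hc0 : 0 ≤ c := by positivity
  have hc1 : c < 1 := by rw [hc, div_lt_one hkpos]; linarith
  have hsplit : (∏ i ∈ Finset.range (d + j), (((d:ℝ) + j) - c - i))
      = (∏ i ∈ Finset.range d, (((d:ℝ) + j) - c - i)) * ∏ i ∈ Finset.range j, ((j:ℝ) - c - i) := by
    rw [Finset.prod_range_add]
    congr 1
    apply Finset.prod_congr rfl; intro i _
    push_cast; ring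
  have hBne : (∏ i ∈ Finset.range d, (((d:ℝ) + j) - c - i)) ≠ 0 := by
    apply Finset.prod_ne_zero_iff.2
    intro i hi
    have hi' : (i:ℝ) ≤ (d:ℝ) - 1 := by
      have h1 := Finset.mem_range.1 hi
      have : (i:ℝ) + 1 ≤ (d:ℝ) := by exact_mod_cast h1
      linarith
    have hj' : (1:ℝ) ≤ (j:ℝ) := by exact_mod_cast hj
    have : (0:ℝ) < (d:ℝ) + j - c - i := by linarith
    linarith
  have hAne : (∏ i ∈ Finset.range j, ((j:ℝ) - c - i)) ≠ 0 := by
    apply Finset.prod_ne_zero_iff.2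
    intro i hi
    have hi' : (i:ℝ) ≤ (j:ℝ) - 1 := by
      have h1 := Finset.mem_range.1 hi
      have : (i:ℝ) + 1 ≤ (j:ℝ) := by exact_mod_cast h1
      linarith
    have : (0:ℝ) < (j:ℝ) - c - i := by linarith
    linarith
  have hfact : (((d+j).choose j : ℝ)) * (j.factorial : ℝ) * (d.factorial : ℝ) = ((d+j).factorial : ℝ) := by
    have h := Nat.choose_mul_factorial_mul_factorial hle
    rw [hd] at h
    exact_mod_cast congrArg (Nat.cast (R := ℝ)) h
  have hCne : (((d+j).choose j : ℝ)) ≠ 0 := Nat.cast_ne_zero.2 (Nat.choose_pos hle).ne'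
  have hfj : (j.factorial : ℝ) ≠ 0 := Nat.cast_ne_zero.2 j.factorial_ne_zero
  have hfd : (d.factorial : ℝ) ≠ 0 := Nat.cast_ne_zero.2 d.factorial_ne_zero
  have hfn : ((d+j).factorial : ℝ) ≠ 0 := Nat.cast_ne_zero.2 (d+j).factorial_ne_zero
  unfold Pdeg gbinom
  rw [Finset.sum_range_one, hd]
  push_cast
  rw [Finset.prod_div_distrib]
  have harg : (∏ i ∈ Finset.range d, ((d:ℝ) + j - (k:ℝ) * (2 + 0) / (k + 1) - i))
      = ∏ i ∈ Finset.range d, ((d:ℝ) + j - 2 * c - i) := by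
    apply Finset.prod_congr rfl; intro i _; rw [hc]; ring
  rw [harg, hsplit]
  set X := ∏ i ∈ Finset.range j, ((j:ℝ) - c - i) with hX
  set B := ∏ i ∈ Finset.range d, ((d:ℝ) + j - c - i) with hB
  set D := ∏ i ∈ Finset.range d, ((d:ℝ) + j - 2 * c - i) with hD
  rw [← hfact]
  field_simp
  ring_nf
  simp

lemma pdeg_bounds (k n j : ℕ) (hj : 1 ≤ j) (hle : j ≤ n) :
    1 - ((n - j : ℕ) : ℝ) / j ≤ Pdeg k n j 0 ∧ Pdeg k n j 0 ≤ 1 := by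
  rw [pdeg_eq k n j hj hle]
  have hkpos : (0:ℝ) < (k:ℝ) + 1 := by positivity
  set c : ℝ := (k : ℝ) / (k + 1) with hc
  have hc0 : 0 ≤ c := by positivity
  have hc1 : c < 1 := by rw [hc, div_lt_one hkpos]; linarith
  have hjR : (1:ℝ) ≤ (j:ℝ) := by exact_mod_cast hj
  have hnj : ((n - j : ℕ):ℝ) = (n:ℝ) - j := by
    rw [Nat.cast_sub hle]
  -- facts for each factor
  have key : ∀ i ∈ Finset.range (n - j),
      (0:ℝ) ≤ ((n : ℝ) - 2 * c - i) / ((n : ℝ) - c - i)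
      ∧ ((n : ℝ) - 2 * c - i) / ((n : ℝ) - c - i) ≤ 1
      ∧ 1 - 1/(j:ℝ) ≤ ((n : ℝ) - 2 * c - i) / ((n : ℝ) - c - i) := by
    intro i hi
    have h1 : (i:ℝ) + 1 ≤ ((n-j:ℕ):ℝ) := by exact_mod_cast Finset.mem_range.1 hi
    rw [hnj] at h1
    have hden : (j:ℝ) + 1 - c ≤ (n:ℝ) - c - i := by linarith
    have hdenpos : (0:ℝ) < (n:ℝ) - c - i := by linarith
    have hnum : (0:ℝ) ≤ (n:ℝ) - 2 * c - i := by linarith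
    refine ⟨by positivity, ?_, ?_⟩
    · rw [div_le_one hdenpos]; linarith
    · have hcj : c * j ≤ (n:ℝ) - c - i := by nlinarith
      have : c / ((n:ℝ) - c - i) ≤ 1 / (j:ℝ) := by
        rw [div_le_div_iff₀ hdenpos (by linarith)]; linarith
      have heq : ((n : ℝ) - 2 * c - i) / ((n : ℝ) - c - i)
          = 1 - c / ((n:ℝ) - c - i) := by
        field_simp
        ring
      rw [heq]; linarith
  constructor
  · calc 1 - ((n - j : ℕ) : ℝ) / j
        = 1 + ((n-j:ℕ):ℝ) * (-(1/(j:ℝ))) := by ring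
      _ ≤ (1 + (-(1/(j:ℝ))))^(n-j) := by
          apply one_add_mul_le_pow
          have : 1/(j:ℝ) ≤ 1 := by
            rw [div_le_one (by linarith)]; linarith
          linarith
      _ = ∏ i ∈ Finset.range (n-j), (1 - 1/(j:ℝ)) := by
          rw [Finset.prod_const, Finset.card_range]; ring_nf
      _ ≤ _ := by
          apply Finset.prod_le_prod
          · intro i _
            have : 1/(j:ℝ) ≤ 1 := by
              rw [div_le_one (by linarith)]; linarith
            linarith
          · intro i hi; exact (key i hi).2.2
  · apply Finset.prod_le_one
    · intro i hi; exact (key i hi).1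
    · intro i hi; exact (key i hi).2.1

/-- Large region: if `j(n) → ∞` and `n - j(n) = o(n)`, then `P{Y_{n,j} = 0} → 1`. -/
theorem ktree_outdegree_large (k : ℕ) (hk : 1 ≤ k) (j : ℕ → ℕ) (hle : ∀ n, j n ≤ n)
    (ho : Tendsto (fun n : ℕ => ((n - j n : ℕ) : ℝ) / n) atTop (nhds 0))
    (hjinf : Tendsto j atTop atTop) :
    Tendsto (fun n : ℕ => Pdeg k n (j n) 0) atTop (nhds 1) := by
  have hev : ∀ᶠ n in atTop, 1 ≤ j n := hjinf.eventually_ge_atTop 1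
  have hev1 : ∀ᶠ n : ℕ in atTop, 1 ≤ n := eventually_ge_atTop 1
  -- j n / n → 1
  have hjn : Tendsto (fun n : ℕ => (j n : ℝ) / n) atTop (nhds 1) := by
    have h := (tendsto_const_nhds (x := (1:ℝ)) (f := atTop (α := ℕ))).sub ho
    rw [sub_zero] at h
    apply h.congr'
    filter_upwards [hev1] with n hn
    have hn0 : (n:ℝ) ≠ 0 := by positivity
    rw [Nat.cast_sub (hle n)]
    field_simp
    ring
  -- (n - j n)/ j n → 0
  have hg : Tendsto (fun n : ℕ => ((n - j n : ℕ) : ℝ) / (j n)) atTop (nhds 0) := by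
    have h := ho.div hjn one_ne_zero
    rw [zero_div] at h
    apply h.congr'
    filter_upwards [hev1] with n hn
    have hn0 : (n:ℝ) ≠ 0 := by positivity
    show ((n - j n : ℕ) : ℝ) / n / ((j n : ℝ) / n) = _
    rw [div_div_div_comm, div_self hn0, div_one]
  have hlow : Tendsto (fun n : ℕ => 1 - ((n - j n : ℕ) : ℝ) / (j n)) atTop (nhds 1) := by
    have h := (tendsto_const_nhds (x := (1:ℝ)) (f := atTop (α := ℕ))).sub hg
    rwa [sub_zero] at h
  apply tendsto_of_tendsto_of_tendsto_of_le_of_le' hlow tendsto_const_nhds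
  · filter_upwards [hev] with n hn
    exact (pdeg_bounds k n (j n) hn (hle n)).1
  · filter_upwards [hev] with n hn
    exact (pdeg_bounds k n (j n) hn (hle n)).2
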